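/- Let L ≥ 1 and m ≥ 1 be natural numbers, h ∈ ℂ^L, and N₀ ≥ 0. For all w₁,…,w_m, w̄₁,…,w̄_m ∈ ℂ^L and all real γ > −1, γ̄ > −1, the following first-order (tangent-plane) global lower bound holds: (Σ_j |⟨h,w_j⟩|² + N₀)/(1+γ) ≥ (Σ_j |⟨h,w̄_j⟩|² + N₀)/(1+γ̄) + (2/(1+γ̄))·Σ_j Re( conj(⟨h,w̄_j⟩) · ⟨h, w_j − w̄_j⟩ ) − ((Σ_j |⟨h,w̄_j⟩|² + N₀)/(1+γ̄)²)·(γ − γ̄). (This bound is the linear under-estimator used in each SCA iteration; it guarantees that every point feasible for the approximated problem is feasible for the original SINR constraints and hence the monotonic convergence of the SCA objective.) -/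

import Mathlib

lemma key_term (a b : ℂ) (t tb : ℝ) :
    2 * ((starRingEnd ℂ) b * (a - b)).re * t * tb ≤
      ‖a‖ ^ 2 * tb ^ 2 + ‖b‖ ^ 2 * t ^ 2 - 2 * ‖b‖ ^ 2 * t * tb := by
  have ha : ‖a‖ ^ 2 = a.re ^ 2 + a.im ^ 2 := by
    rw [Complex.sq_norm, Complex.normSq_apply]; ring
  have hb : ‖b‖ ^ 2 = b.re ^ 2 + b.im ^ 2 := by
    rw [Complex.sq_norm, Complex.normSq_apply]; ring
  simp only [Complex.mul_re, Complex.sub_re, Complex.sub_im, Complex.conj_re,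
    Complex.conj_im, ha, hb]
  nlinarith [sq_nonneg (tb * a.re - t * b.re), sq_nonneg (tb * a.im - t * b.im)]

/-- First-order (tangent-plane) global lower bound used in each SCA iteration:
`(Σ_j |⟨h,w_j⟩|² + N₀)/(1+γ) ≥ (Σ_j |⟨h,w̄_j⟩|² + N₀)/(1+γ̄)
  + (2/(1+γ̄))·Σ_j Re( conj(⟨h,w̄_j⟩)·⟨h, w_j − w̄_j⟩ )
  − ((Σ_j |⟨h,w̄_j⟩|² + N₀)/(1+γ̄)²)·(γ − γ̄)`. -/
theorem stmt_11 (L m : ℕ) (hL : 1 ≤ L) (hm : 1 ≤ m)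
    (h : EuclideanSpace ℂ (Fin L)) (N₀ : ℝ) (hN : 0 ≤ N₀)
    (w wb : Fin m → EuclideanSpace ℂ (Fin L)) (γ γb : ℝ)
    (hγ : -1 < γ) (hγb : -1 < γb) :
    (∑ j, ‖(inner ℂ h (w j) : ℂ)‖ ^ 2 + N₀) / (1 + γ) ≥
      (∑ j, ‖(inner ℂ h (wb j) : ℂ)‖ ^ 2 + N₀) / (1 + γb)
        + (2 / (1 + γb)) *
            ∑ j, ((starRingEnd ℂ) (inner ℂ h (wb j) : ℂ) * (inner ℂ h (w j - wb j) : ℂ)).re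
        - ((∑ j, ‖(inner ℂ h (wb j) : ℂ)‖ ^ 2 + N₀) / (1 + γb) ^ 2) * (γ - γb) := by
  have ht : (0:ℝ) < 1 + γ := by linarith
  have htb : (0:ℝ) < 1 + γb := by linarith
  set t := 1 + γ with htdef
  set tb := 1 + γb with htbdef
  set a : Fin m → ℂ := fun j => inner ℂ h (w j) with ha
  set b : Fin m → ℂ := fun j => inner ℂ h (wb j) with hb
  have hsub : ∀ j, (inner ℂ h (w j - wb j) : ℂ) = a j - b j := by
    intro j; simp [ha, hb, inner_sub_right]
  simp only [hsub]
  set A := ∑ j, ‖a j‖ ^ 2 with hA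
  set B := ∑ j, ‖b j‖ ^ 2 with hB
  set R := ∑ j, ((starRingEnd ℂ) (b j) * (a j - b j)).re with hR
  have key : 2 * R * t * tb ≤ A * tb ^ 2 + B * t ^ 2 - 2 * B * t * tb := by
    have hsum : ∑ j : Fin m, 2 * ((starRingEnd ℂ) (b j) * (a j - b j)).re * t * tb ≤
        ∑ j : Fin m, (‖a j‖ ^ 2 * tb ^ 2 + ‖b j‖ ^ 2 * t ^ 2 - 2 * ‖b j‖ ^ 2 * t * tb) :=
      Finset.sum_le_sum (fun j _ => key_term (a j) (b j) t tb)
    have e1 : 2 * R * t * tb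
        = ∑ j : Fin m, 2 * ((starRingEnd ℂ) (b j) * (a j - b j)).re * t * tb := by
      rw [hR, Finset.mul_sum, Finset.sum_mul, Finset.sum_mul]
    have e2 : A * tb ^ 2 + B * t ^ 2 - 2 * B * t * tb
        = ∑ j : Fin m, (‖a j‖ ^ 2 * tb ^ 2 + ‖b j‖ ^ 2 * t ^ 2 - 2 * ‖b j‖ ^ 2 * t * tb) := by
      rw [hA, hB, Finset.sum_mul, Finset.sum_mul, Finset.mul_sum, Finset.sum_mul, Finset.sum_mul,
        ← Finset.sum_add_distrib, ← Finset.sum_sub_distrib]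
    rw [e1, e2]; exact hsum
  have hγsub : γ - γb = t - tb := by simp [htdef, htbdef]
  rw [ge_iff_le, hγsub, ← sub_nonneg]
  have hne : (1+γ) ≠ 0 := ne_of_gt ht
  have hneb : (1+γb) ≠ 0 := ne_of_gt htb
  have : (A + N₀) / t - ((B + N₀) / tb + 2 / tb * R - (B + N₀) / tb ^ 2 * (t - tb)) =
      ((A + N₀) * tb ^ 2 + (B + N₀) * t ^ 2 - 2 * (B + N₀) * t * tb - 2 * R * t * tb)
        / (t * tb ^ 2) := by
    field_simp
    ring
  rw [this]
  apply div_nonneg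
  · nlinarith [sq_nonneg (t - tb)]
  · positivity
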